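/- If G is a well-covered finite simple graph with ω(G) ≤ α(G) = 3, then the coefficient sequence of its independence polynomial I(G;x) = s₀ + s₁x + s₂x² + s₃x³ is log-concave, i.e., s₁² ≥ s₀s₂ and s₂² ≥ s₁s₃. -/

import Mathlib

open Classical in
/-- The set of stable (independent) sets of a graph, as finsets. -/
noncomputable def stableSets {V : Type*} [Fintype V] (G : SimpleGraph V) : Finset (Finset V) :=
  Finset.univ.filter (fun s : Finset V => ∀ v ∈ s, ∀ w ∈ s, ¬ G.Adj v w)

/-- The independence number: the maximum size of a stable set. -/
noncomputable def indepNum {V : Type*} [Fintype V] (G : SimpleGraph V) : ℕ :=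
  (stableSets G).sup Finset.card

open Classical in
/-- `sCount G k` is the number of stable sets of cardinality `k` in `G`. -/
noncomputable def sCount {V : Type*} [Fintype V] (G : SimpleGraph V) (k : ℕ) : ℕ :=
  ((stableSets G).filter (fun s => s.card = k)).card

/-- The clique number: the independence number of the complement. -/
noncomputable def cliqueNum {V : Type*} [Fintype V] (G : SimpleGraph V) : ℕ :=
  indepNum Gᶜ

/-- A graph is well-covered if every maximal stable set is a maximum stable set. -/
def WellCovered {V : Type*} [Fintype V] (G : SimpleGraph V) : Prop :=
  ∀ s ∈ stableSets G, (∀ t ∈ stableSets G, s ⊆ t → s = t) → s.card = indepNum G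

open Finset

section AuxLemmas

open Classical

variable {V : Type*} [Fintype V] {G : SimpleGraph V}

lemma mem_stableSets_iff {s : Finset V} :
    s ∈ stableSets G ↔ ∀ v ∈ s, ∀ w ∈ s, ¬ G.Adj v w := by
  simp [stableSets]

lemma stableSets_subset {s t : Finset V} (ht : t ∈ stableSets G) (hst : s ⊆ t) :
    s ∈ stableSets G := by
  rw [mem_stableSets_iff] at ht ⊢
  exact fun v hv w hw => ht v (hst hv) w (hst hw)

lemma card_le_indepNum {s : Finset V} (hs : s ∈ stableSets G) : s.card ≤ indepNum G :=
  Finset.le_sup hs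

/-- Every stable set is contained in a maximal stable set. -/
lemma exists_maximal_superset {s : Finset V} (hs : s ∈ stableSets G) :
    ∃ m ∈ stableSets G, s ⊆ m ∧ ∀ t ∈ stableSets G, m ⊆ t → m = t := by
  classical
  set F : Finset (Finset V) := (stableSets G).filter (fun t => s ⊆ t) with hF
  have hne : F.Nonempty := ⟨s, by simp [hF, hs]⟩
  obtain ⟨m, hm, hmax⟩ := F.exists_maximal hne
  simp only [hF, mem_filter] at hm
  refine ⟨m, hm.1, hm.2, ?_⟩
  intro t ht hmt
  by_contra hne'
  exact hne' (le_antisymm hmt (hmax (by simp [hF, ht, hm.2.trans hmt]) hmt))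

/-- In a well-covered graph with independence number 3, every stable set of card `< 3`
is contained in a stable set of card 3. -/
lemma exists_superset_card_three (hwc : WellCovered G) (hα : indepNum G = 3)
    {s : Finset V} (hs : s ∈ stableSets G) :
    ∃ m ∈ stableSets G, s ⊆ m ∧ m.card = 3 := by
  obtain ⟨m, hm, hsm, hmax⟩ := exists_maximal_superset hs
  exact ⟨m, hm, hsm, (hwc m hm hmax).trans hα⟩

end AuxLemmas

/-- If `G` is well-covered with `ω(G) ≤ α(G) = 3`, then the coefficient sequence
`(s₀, s₁, s₂, s₃)` of its independence polynomial is log-concave. -/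
theorem wellCovered_alpha_three_logConcave {V : Type*} [Fintype V] (G : SimpleGraph V)
    (hwc : WellCovered G) (hω : cliqueNum G ≤ indepNum G) (hα : indepNum G = 3) :
    sCount G 0 * sCount G 2 ≤ sCount G 1 ^ 2 ∧
      sCount G 1 * sCount G 3 ≤ sCount G 2 ^ 2 := by
  classical
  set L1 : Finset (Finset V) := (stableSets G).filter (fun s => s.card = 1) with hL1
  set L2 : Finset (Finset V) := (stableSets G).filter (fun s => s.card = 2) with hL2
  set L3 : Finset (Finset V) := (stableSets G).filter (fun s => s.card = 3) with hL3
  -- s₀ = 1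
  have hs0 : sCount G 0 = 1 := by
    have : (stableSets G).filter (fun s => s.card = 0) = {∅} := by
      ext s
      simp only [mem_filter, Finset.mem_singleton, Finset.card_eq_zero]
      constructor
      · rintro ⟨-, rfl⟩; rfl
      · rintro rfl; exact ⟨by simp [mem_stableSets_iff], rfl⟩
    show ((stableSets G).filter (fun s => s.card = 0)).card = 1
    rw [this, Finset.card_singleton]
  -- L1 is exactly the set of singletons
  have hL1eq : L1 = (Finset.univ : Finset V).powersetCard 1 := by
    ext s
    simp only [hL1, mem_filter, mem_powersetCard, Finset.card_eq_one]
    constructor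
    · rintro ⟨-, h⟩; exact ⟨Finset.subset_univ s, h⟩
    · rintro ⟨-, a, rfl⟩
      refine ⟨?_, ⟨a, rfl⟩⟩
      rw [mem_stableSets_iff]
      intro v hv w hw
      simp only [Finset.mem_singleton] at hv hw
      subst hv; subst hw; exact G.irrefl
  have hs1 : sCount G 1 = Fintype.card V := by
    show L1.card = _
    rw [hL1eq, Finset.card_powersetCard, Finset.card_univ, Nat.choose_one_right]
  -- first inequality : s₂ ≤ (card V choose 2) ≤ (card V)^2
  have hfirst : sCount G 0 * sCount G 2 ≤ sCount G 1 ^ 2 := by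
    have h2 : sCount G 2 ≤ (Fintype.card V).choose 2 := by
      rw [sCount]
      have : (stableSets G).filter (fun s => s.card = 2) ⊆
          (Finset.univ : Finset V).powersetCard 2 := by
        intro s hs
        simp only [mem_filter] at hs
        simp [mem_powersetCard, hs.2]
      calc ((stableSets G).filter (fun s => s.card = 2)).card
          ≤ ((Finset.univ : Finset V).powersetCard 2).card := Finset.card_le_card this
        _ = (Fintype.card V).choose 2 := by rw [Finset.card_powersetCard]; simp
    have hch : (Fintype.card V).choose 2 ≤ (Fintype.card V) ^ 2 :=
      Nat.choose_le_pow _ 2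
    rw [hs0, hs1, one_mul]
    exact h2.trans hch
  -- second inequality via double counting
  -- Claim A : s₁ * 2 ≤ s₂ * 2, i.e. s₁ ≤ s₂
  have h12 : sCount G 1 ≤ sCount G 2 := by
    show L1.card ≤ L2.card
    have key : L1.card * 2 ≤ L2.card * 2 := by
      apply Finset.card_mul_le_card_mul (fun a b => a ⊆ b)
      · -- each 1-set has at least 2 extensions to 2-sets
        intro A hA
        simp only [hL1, mem_filter] at hA
        obtain ⟨hAst, hAcard⟩ := hA
        obtain ⟨m, hmst, hAm, hmcard⟩ := exists_superset_card_three hwc hα hAst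
        have hdiff : (m \ A).card = 2 := by
          rw [Finset.card_sdiff_of_subset hAm, hmcard, hAcard]
        obtain ⟨v, w, hvw, hvwm⟩ : ∃ v w, v ≠ w ∧ ({v, w} : Finset V) ⊆ m \ A := by
          rw [Finset.card_eq_two] at hdiff
          obtain ⟨v, w, hvw, h⟩ := hdiff
          exact ⟨v, w, hvw, by rw [h]⟩
        have hv : v ∈ m \ A := hvwm (by simp)
        have hw : w ∈ m \ A := hvwm (by simp)
        have hB : ∀ x ∈ m \ A, insert x A ∈ Finset.bipartiteAbove (fun a b => a ⊆ b) L2 A := by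
          intro x hx
          simp only [Finset.bipartiteAbove, mem_filter, hL2]
          refine ⟨⟨stableSets_subset hmst ?_, ?_⟩, Finset.subset_insert _ _⟩
          · intro y hy
            rcases Finset.mem_insert.mp hy with rfl | hy
            · exact (Finset.mem_sdiff.mp hx).1
            · exact hAm hy
          · rw [Finset.card_insert_of_notMem (Finset.mem_sdiff.mp hx).2, hAcard]
        have hsub : ({insert v A, insert w A} : Finset (Finset V)) ⊆
            Finset.bipartiteAbove (fun a b => a ⊆ b) L2 A := by
          intro B hB'
          rcases Finset.mem_insert.mp hB' with rfl | hB'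
          · exact hB v hv
          · rw [Finset.mem_singleton] at hB'; subst hB'; exact hB w hw
        have hcard2 : ({insert v A, insert w A} : Finset (Finset V)).card = 2 := by
          rw [Finset.card_insert_of_notMem, Finset.card_singleton]
          simp only [Finset.mem_singleton]
          intro h
          apply hvw
          have hvA : v ∉ A := (Finset.mem_sdiff.mp hv).2
          have hwA : w ∉ A := (Finset.mem_sdiff.mp hw).2
          have : v ∈ insert w A := h ▸ Finset.mem_insert_self v A
          rcases Finset.mem_insert.mp this with h' | h'
          · exact h'
          · exact absurd h' hvA
        calc 2 = ({insert v A, insert w A} : Finset (Finset V)).card := hcard2.symm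
          _ ≤ _ := Finset.card_le_card hsub
      · -- each 2-set contains at most 2 one-sets
        intro B hB
        simp only [hL2, mem_filter] at hB
        have hsub : Finset.bipartiteBelow (fun a b => a ⊆ b) L1 B ⊆ B.powersetCard 1 := by
          intro A hA
          simp only [Finset.bipartiteBelow, mem_filter, hL1] at hA
          exact Finset.mem_powersetCard.mpr ⟨hA.2, hA.1.2⟩
        calc (Finset.bipartiteBelow (fun a b => a ⊆ b) L1 B).card
            ≤ (B.powersetCard 1).card := Finset.card_le_card hsub
          _ = 2 := by rw [Finset.card_powersetCard, hB.2]; rfl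
    exact Nat.le_of_mul_le_mul_right key (by norm_num)
  -- Claim B : s₃ ≤ s₂
  have h32 : sCount G 3 ≤ sCount G 2 := by
    show L3.card ≤ L2.card
    have key : L3.card * 3 ≤ L2.card * 3 := by
      apply Finset.card_mul_le_card_mul (fun A B => B ⊆ A)
      · -- each 3-set has at least 3 two-subsets
        intro A hA
        simp only [hL3, mem_filter] at hA
        have hsub : A.powersetCard 2 ⊆ Finset.bipartiteAbove (fun A B => B ⊆ A) L2 A := by
          intro B hB
          rw [Finset.mem_powersetCard] at hB
          simp only [Finset.bipartiteAbove, mem_filter, hL2]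
          exact ⟨⟨stableSets_subset hA.1 hB.1, hB.2⟩, hB.1⟩
        calc 3 = (A.powersetCard 2).card := by rw [Finset.card_powersetCard, hA.2]; rfl
          _ ≤ _ := Finset.card_le_card hsub
      · -- each 2-set is contained in at most 3 three-sets
        intro B hB
        simp only [hL2, mem_filter] at hB
        obtain ⟨hBst, hBcard⟩ := hB
        set N : Finset V := Finset.univ.filter
          (fun v => v ∉ B ∧ insert v B ∈ stableSets G) with hN
        -- N is a stable set of Gᶜ
        have hNst : N ∈ stableSets Gᶜ := by
          rw [mem_stableSets_iff]
          intro v hv w hw hadj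
          rw [SimpleGraph.compl_adj] at hadj
          obtain ⟨hne, hnadj⟩ := hadj
          simp only [hN, mem_filter] at hv hw
          -- then insert v (insert w B) is stable of card 4 > 3
          have hbig : insert v (insert w B) ∈ stableSets G := by
            have hmem : ∀ z, z ∈ insert v (insert w B) → z = v ∨ z = w ∨ z ∈ B := by
              intro z hz
              rcases Finset.mem_insert.mp hz with h | hz'
              · exact Or.inl h
              · rcases Finset.mem_insert.mp hz' with h | hz''
                · exact Or.inr (Or.inl h)
                · exact Or.inr (Or.inr hz'')
            have hvB' := mem_stableSets_iff.mp hv.2.2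
            have hwB' := mem_stableSets_iff.mp hw.2.2
            have hBs := mem_stableSets_iff.mp hBst
            rw [mem_stableSets_iff]
            intro x hx y hy
            rcases hmem x hx with hxv | hxw | hxB <;> rcases hmem y hy with hyv | hyw | hyB
            · rw [hxv, hyv]; exact G.irrefl
            · rw [hxv, hyw]; exact hnadj
            · rw [hxv]
              exact hvB' v (Finset.mem_insert_self _ _) y (Finset.mem_insert_of_mem hyB)
            · rw [hxw, hyv]; intro h; exact hnadj h.symm
            · rw [hxw, hyw]; exact G.irrefl
            · rw [hxw]
              exact hwB' w (Finset.mem_insert_self _ _) y (Finset.mem_insert_of_mem hyB)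
            · rw [hyv]; intro h
              exact hvB' v (Finset.mem_insert_self _ _) x (Finset.mem_insert_of_mem hxB) h.symm
            · rw [hyw]; intro h
              exact hwB' w (Finset.mem_insert_self _ _) x (Finset.mem_insert_of_mem hxB) h.symm
            · exact hBs x hxB y hyB
          have hcard4 : (insert v (insert w B)).card = 4 := by
            rw [Finset.card_insert_of_notMem, Finset.card_insert_of_notMem hw.2.1, hBcard]
            simp only [Finset.mem_insert]
            push_neg
            exact ⟨hne, hv.2.1⟩
          have := card_le_indepNum hbig
          rw [hcard4, hα] at this
          omega
        have hNcard : N.card ≤ 3 := by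
          have := card_le_indepNum hNst
          rw [show indepNum Gᶜ = cliqueNum G from rfl] at this
          omega
        -- inject the fiber into N.image singleton
        have hsub : (Finset.bipartiteBelow (fun A B => B ⊆ A) L3 B).card ≤
            (N.image (fun v => ({v} : Finset V))).card := by
          apply Finset.card_le_card_of_injOn (fun A => A \ B)
          · intro A hA
            simp only [Finset.mem_coe, Finset.mem_bipartiteBelow, mem_filter, hL3] at hA
            obtain ⟨⟨hAst, hAcard⟩, hBA⟩ := hA
            have hd : (A \ B).card = 1 := by
              rw [Finset.card_sdiff_of_subset hBA, hAcard, hBcard]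
            obtain ⟨v, hv⟩ := Finset.card_eq_one.mp hd
            rw [Finset.mem_coe, Finset.mem_image]
            refine ⟨v, ?_, hv.symm⟩
            have hvm : v ∈ A \ B := hv ▸ Finset.mem_singleton_self v
            rw [Finset.mem_sdiff] at hvm
            simp only [hN, mem_filter]
            refine ⟨Finset.mem_univ v, hvm.2, ?_⟩
            apply stableSets_subset hAst
            intro x hx
            rcases Finset.mem_insert.mp hx with rfl | hx
            · exact hvm.1
            · exact hBA hx
          · intro A hA A' hA' h
            simp only [Finset.mem_coe, Finset.bipartiteBelow, mem_filter] at hA hA'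
            have h' : A \ B = A' \ B := h
            calc A = B ∪ (A \ B) := (Finset.union_sdiff_of_subset hA.2).symm
              _ = B ∪ (A' \ B) := by rw [h']
              _ = A' := Finset.union_sdiff_of_subset hA'.2
        calc (Finset.bipartiteBelow (fun A B => B ⊆ A) L3 B).card
            ≤ (N.image (fun v => ({v} : Finset V))).card := hsub
          _ ≤ N.card := Finset.card_image_le
          _ ≤ 3 := hNcard
    exact Nat.le_of_mul_le_mul_right key (by norm_num)
  refine ⟨hfirst, ?_⟩
  calc sCount G 1 * sCount G 3 ≤ sCount G 2 * sCount G 2 :=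
        Nat.mul_le_mul h12 h32
    _ = sCount G 2 ^ 2 := (sq _).symm
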